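/- Fix n ≥ 1, positive reals ν₁, …, νₙ, a parameter set Θ, and for each θ ∈ Θ vectors ψ₁(θ), …, ψₙ(θ) ∈ ℝʳ. Let Δ = {w ∈ ℝⁿ : wᵢ ≥ 0 for all i and ∑ᵢ wᵢ = 1}, let L(w) = ∏ᵢ (n νᵢ wᵢ) / (∑ᵢ νᵢ wᵢ)ⁿ, let W_θ = {w ∈ Δ : ∑ᵢ wᵢ ψᵢ(θ) = 0}, let V = {θ ∈ Θ : ∑ᵢ νᵢ⁻¹ ψᵢ(θ) = 0}, and let Θ̂_CE = {θ ∈ Θ : there exists w ∈ W_θ such that L(w′) ≤ L(w) for every θ′ ∈ Θ and every w′ ∈ W_{θ′}}. If V is nonempty, then V = Θ̂_CE. (Theorem 1: the maximum conditional empirical likelihood estimators coincide exactly with the solutions of the inverse-conditional-visibility weighted estimating equations.) -/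

import Mathlib

open Finset

lemma amgm_le {n : ℕ} (hn : 0 < n) (x : Fin n → ℝ) (hx : ∀ i, 0 ≤ x i) :
    ∏ i, ((n : ℝ) * x i) ≤ (∑ i, x i) ^ n := by
  by_cases h0 : ∃ j, x j = 0
  · obtain ⟨j, hj⟩ := h0
    have : ∏ i, ((n : ℝ) * x i) = 0 :=
      Finset.prod_eq_zero (Finset.mem_univ j) (by simp [hj])
    rw [this]
    exact pow_nonneg (Finset.sum_nonneg fun i _ => hx i) n
  · push_neg at h0
    have hpos : ∀ i, 0 < x i := fun i => (hx i).lt_of_ne' (h0 i)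
    have hs : 0 < ∑ i, x i :=
      Finset.sum_pos (fun i _ => hpos i) (Finset.univ_nonempty_iff.2 ⟨⟨0, hn⟩⟩)
    have hnR : (0:ℝ) < n := Nat.cast_pos.2 hn
    have hjensen := (strictConcaveOn_log_Ioi.concaveOn).le_map_sum
      (t := Finset.univ) (w := fun _ : Fin n => (n:ℝ)⁻¹) (p := x)
      (fun i _ => by positivity) (by simp [Finset.card_univ]; field_simp)
      (fun i _ => Set.mem_Ioi.2 (hpos i))
    have hsum : ∑ i, (n:ℝ)⁻¹ • x i = (∑ i, x i) / n := by
      rw [← Finset.smul_sum]; simp [smul_eq_mul, div_eq_inv_mul]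
    have hlog : ∑ i, (n:ℝ)⁻¹ • Real.log (x i) = (n:ℝ)⁻¹ * Real.log (∏ i, x i) := by
      simp only [smul_eq_mul]
      rw [← Finset.mul_sum, Real.log_prod (fun i _ => (hpos i).ne')]
    rw [hsum, hlog] at hjensen
    have hprodle : ∏ i, x i ≤ ((∑ i, x i) / n) ^ n := by
      have h1 : Real.log (∏ i, x i) ≤ (n:ℝ) * Real.log ((∑ i, x i) / n) :=
        (inv_mul_le_iff₀ hnR).1 hjensen
      have h2 : Real.log (∏ i, x i) ≤ Real.log (((∑ i, x i) / n) ^ n) := by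
        rw [Real.log_pow]; exact_mod_cast h1
      exact (Real.log_le_log_iff (Finset.prod_pos fun i _ => hpos i)
        (pow_pos (by positivity) n)).1 h2
    calc ∏ i, ((n : ℝ) * x i) = (n:ℝ)^n * ∏ i, x i := by
          rw [Finset.prod_mul_distrib]; simp [Finset.card_univ]
      _ ≤ (n:ℝ)^n * ((∑ i, x i) / n) ^ n := by
          exact mul_le_mul_of_nonneg_left hprodle (by positivity)
      _ = (∑ i, x i) ^ n := by
          rw [← mul_pow, mul_div_cancel₀ _ hnR.ne']

lemma amgm_eq {n : ℕ} (hn : 0 < n) (x : Fin n → ℝ) (hx : ∀ i, 0 ≤ x i)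
    (hs : 0 < ∑ i, x i) (hge : (∑ i, x i) ^ n ≤ ∏ i, ((n : ℝ) * x i)) :
    ∀ i j, x i = x j := by
  have hnR : (0:ℝ) < n := Nat.cast_pos.2 hn
  have hpos : ∀ i, 0 < x i := by
    intro i
    rcases (hx i).lt_or_eq with h | h
    · exact h
    · exfalso
      have : ∏ i, ((n : ℝ) * x i) = 0 :=
        Finset.prod_eq_zero (Finset.mem_univ i) (by simp [← h])
      rw [this] at hge
      exact absurd hge (not_le.2 (pow_pos hs n))
  -- convert hypothesis to log form
  have hprodge : ((∑ i, x i) / n) ^ n ≤ ∏ i, x i := by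
    have h1 : (∑ i, x i) ^ n ≤ (n:ℝ)^n * ∏ i, x i := by
      rwa [Finset.prod_mul_distrib, Finset.prod_const, Finset.card_univ,
        Fintype.card_fin] at hge
    rw [div_pow, div_le_iff₀ (by positivity)]
    linarith [h1]
  have hlogge : Real.log ((∑ i, x i) / n) ≤ (n:ℝ)⁻¹ * Real.log (∏ i, x i) := by
    have := (Real.log_le_log_iff (pow_pos (by positivity) n)
      (Finset.prod_pos fun i _ => hpos i)).2 hprodge
    rw [Real.log_pow] at this
    rw [le_inv_mul_iff₀ hnR]
    simpa using this
  have key := strictConcaveOn_log_Ioi.eq_of_map_sum_eq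
    (t := Finset.univ) (w := fun _ : Fin n => (n:ℝ)⁻¹) (p := x)
    (fun i _ => by positivity) (by simp [Finset.card_univ]; field_simp)
    (fun i _ => Set.mem_Ioi.2 (hpos i)) ?_
  · intro i j; exact key (Finset.mem_univ i) (Finset.mem_univ j)
  · have hsum : ∑ i, (n:ℝ)⁻¹ • x i = (∑ i, x i) / n := by
      rw [← Finset.smul_sum]; simp [smul_eq_mul, div_eq_inv_mul]
    have hlog : ∑ i, (n:ℝ)⁻¹ • Real.log (x i) = (n:ℝ)⁻¹ * Real.log (∏ i, x i) := by
      simp only [smul_eq_mul]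
      rw [← Finset.mul_sum, Real.log_prod (fun i _ => (hpos i).ne')]
    rw [hsum, hlog]
    exact hlogge

/-- Theorem 1: if the solution set `V` of the inverse-visibility weighted estimating equations
is nonempty, it coincides with the set `Θ̂_CE` of maximum conditional empirical likelihood
estimators. -/
theorem solutions_eq_max_cond_emp_lik
    {n r : ℕ} (hn : 1 ≤ n) (ν : Fin n → ℝ) (hν : ∀ i, 0 < ν i)
    {Θ : Type*} (ψ : Θ → Fin n → (Fin r → ℝ)) :
    ∀ (Δ : Set (Fin n → ℝ)), Δ = {w | (∀ i, 0 ≤ w i) ∧ ∑ i, w i = 1} →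
    ∀ (L : (Fin n → ℝ) → ℝ),
      L = (fun w => (∏ i, ((n : ℝ) * ν i * w i)) / (∑ i, ν i * w i) ^ n) →
    ∀ (W : Θ → Set (Fin n → ℝ)), W = (fun θ => {w ∈ Δ | ∑ i, w i • ψ θ i = 0}) →
    ∀ (V : Set Θ), V = {θ | ∑ i, (ν i)⁻¹ • ψ θ i = 0} →
    ∀ (ΘCE : Set Θ),
      ΘCE = {θ | ∃ w ∈ W θ, ∀ θ' : Θ, ∀ w' ∈ W θ', L w' ≤ L w} →
    V.Nonempty → V = ΘCE := by
  intro Δ hΔ L hL W hW V hV ΘCE hΘCE hVne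
  obtain ⟨θ₀, hθ₀⟩ := hVne
  rw [hV, Set.mem_setOf_eq] at hθ₀
  subst hΔ hL hW hV hΘCE
  have hn0 : 0 < n := hn
  have hnR : (0:ℝ) < n := by exact_mod_cast hn0
  have hne : (Finset.univ : Finset (Fin n)).Nonempty := ⟨⟨0, hn0⟩, Finset.mem_univ _⟩
  have hc : 0 < ∑ j, (ν j)⁻¹ := Finset.sum_pos (fun j _ => inv_pos.2 (hν j)) hne
  set c := ∑ j, (ν j)⁻¹ with hcdef
  set p : Fin n → ℝ := fun i => (ν i)⁻¹ / c with hpdef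
  have hp0 : ∀ i, 0 ≤ p i := fun i => div_nonneg (inv_pos.2 (hν i)).le hc.le
  have hp1 : ∑ i, p i = 1 := by
    simp only [hpdef]
    rw [← Finset.sum_div]
    exact div_self hc.ne'
  have hνp : ∀ i, ν i * p i = c⁻¹ := fun i => by
    simp only [hpdef]
    rw [← mul_div_assoc, mul_inv_cancel₀ (hν i).ne', one_div]
  have hsump : ∑ i, ν i * p i = (n : ℝ) * c⁻¹ := by
    rw [Finset.sum_congr rfl (fun i _ => hνp i), Finset.sum_const, Finset.card_univ,
      Fintype.card_fin, nsmul_eq_mul]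
  have hLp : (∏ i, ((n:ℝ) * ν i * p i)) / (∑ i, ν i * p i) ^ n = 1 := by
    have h1 : ∀ i, (n:ℝ) * ν i * p i = (n:ℝ) * c⁻¹ := fun i => by rw [mul_assoc, hνp i]
    rw [Finset.prod_congr rfl (fun i _ => h1 i), Finset.prod_const, hsump,
      Finset.card_univ, Fintype.card_fin]
    exact div_self (pow_ne_zero _ (by positivity))
  have hpW : ∀ θ : Θ, (∑ i, (ν i)⁻¹ • ψ θ i = 0) → ∑ i, p i • ψ θ i = 0 := by
    intro θ hθ
    have h2 : ∑ i, p i • ψ θ i = c⁻¹ • ∑ i, (ν i)⁻¹ • ψ θ i := by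
      rw [Finset.smul_sum]
      refine Finset.sum_congr rfl fun i _ => ?_
      rw [smul_smul]
      congr 1
      simp only [hpdef]
      rw [div_eq_mul_inv, mul_comm]
    rw [h2, hθ, smul_zero]
  have hle : ∀ w : Fin n → ℝ, (∀ i, 0 ≤ w i) → ∑ i, w i = 1 →
      (∏ i, ((n:ℝ) * ν i * w i)) / (∑ i, ν i * w i) ^ n ≤ 1 := by
    intro w hw0 hw1
    have hx : ∀ i, 0 ≤ ν i * w i := fun i => mul_nonneg (hν i).le (hw0 i)
    have hspos : 0 < ∑ i, ν i * w i := by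
      obtain ⟨j, hj⟩ : ∃ j, 0 < w j := by
        by_contra h
        push_neg at h
        have hz : ∑ i, w i = 0 :=
          Finset.sum_eq_zero fun i _ => le_antisymm (h i) (hw0 i)
        rw [hz] at hw1; norm_num at hw1
      exact Finset.sum_pos' (fun i _ => hx i) ⟨j, Finset.mem_univ j, mul_pos (hν j) hj⟩
    rw [div_le_one (pow_pos hspos n)]
    have := amgm_le hn0 (fun i => ν i * w i) hx
    simpa [mul_assoc] using this
  ext θ
  simp only [Set.mem_setOf_eq]
  constructor
  · intro hθ
    refine ⟨p, ⟨⟨hp0, hp1⟩, hpW θ hθ⟩, ?_⟩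
    intro θ' w' hw'
    obtain ⟨⟨hw'0, hw'1⟩, -⟩ := hw'
    calc (∏ i, ((n:ℝ) * ν i * w' i)) / (∑ i, ν i * w' i) ^ n ≤ 1 := hle w' hw'0 hw'1
      _ = (∏ i, ((n:ℝ) * ν i * p i)) / (∑ i, ν i * p i) ^ n := hLp.symm
  · rintro ⟨w, ⟨⟨hw0, hw1⟩, hwψ⟩, hmax⟩
    have hx : ∀ i, 0 ≤ ν i * w i := fun i => mul_nonneg (hν i).le (hw0 i)
    have hspos : 0 < ∑ i, ν i * w i := by
      obtain ⟨j, hj⟩ : ∃ j, 0 < w j := by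
        by_contra h
        push_neg at h
        have hz : ∑ i, w i = 0 :=
          Finset.sum_eq_zero fun i _ => le_antisymm (h i) (hw0 i)
        rw [hz] at hw1; norm_num at hw1
      exact Finset.sum_pos' (fun i _ => hx i) ⟨j, Finset.mem_univ j, mul_pos (hν j) hj⟩
    have h1 : 1 ≤ (∏ i, ((n:ℝ) * ν i * w i)) / (∑ i, ν i * w i) ^ n := by
      have := hmax θ₀ p ⟨⟨hp0, hp1⟩, hpW θ₀ hθ₀⟩
      rwa [hLp] at this
    have hgeprod : (∑ i, ν i * w i) ^ n ≤ ∏ i, ((n:ℝ) * (ν i * w i)) := by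
      have h2 := (one_le_div (pow_pos hspos n)).1 h1
      simpa [mul_assoc] using h2
    have heq := amgm_eq hn0 (fun i => ν i * w i) hx hspos hgeprod
    set i₀ : Fin n := ⟨0, hn0⟩
    set t : ℝ := ν i₀ * w i₀ with htdef
    have ht : ∀ i, ν i * w i = t := fun i => heq i i₀
    have hst : ∑ i, ν i * w i = (n : ℝ) * t := by
      rw [Finset.sum_congr rfl (fun i _ => ht i), Finset.sum_const, Finset.card_univ,
        Fintype.card_fin, nsmul_eq_mul]
    have htpos : 0 < t := by
      rw [hst] at hspos
      nlinarith
    have hwi : ∀ i, w i = t * (ν i)⁻¹ := by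
      intro i
      have hgi := ht i
      rw [mul_comm] at hgi
      exact (eq_mul_inv_iff_mul_eq₀ (hν i).ne').2 hgi
    have h3 : ∑ i, w i • ψ θ i = t • ∑ i, (ν i)⁻¹ • ψ θ i := by
      rw [Finset.smul_sum]
      exact Finset.sum_congr rfl fun i _ => by rw [hwi i, ← smul_smul]
    rw [h3] at hwψ
    exact (smul_eq_zero.1 hwψ).resolve_left htpos.ne'
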